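/- Let H be a finite abelian group and let C ⊆ H be nonempty such that every single element c ∈ C generates H (i.e. H = ⟨c⟩ for each c ∈ C) and C ∩ (−C) = ∅. Let γ > 2 be a real number and let S ⊆ H be such that def_H(S) ≥ γ·|C|. Then there exists c ∈ C with λ_S(c) ≥ (1 − 4/γ)·|C|. -/

import Mathlib

open Finset

/-- `λ_S(c) = |(S + c) \ S|`. -/
def lam {H : Type*} [AddCommGroup H] [DecidableEq H] (S : Finset H) (c : H) : ℕ :=
  ((S.image (· + c)) \ S).card

/-- `def_H(S) = min {|S|, |H \ S|}`. -/
def deficiency {H : Type*} [AddCommGroup H] [Fintype H] [DecidableEq H] (S : Finset H) : ℕ :=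
  min S.card Sᶜ.card

namespace Stmt11Aux

open Pointwise

variable {H : Type*} [AddCommGroup H] [DecidableEq H]

lemma mem_shift {S : Finset H} {c x : H} : x ∈ S.image (· + c) ↔ x - c ∈ S := by
  simp only [mem_image]
  constructor
  · rintro ⟨a, ha, rfl⟩; simpa using ha
  · intro h; exact ⟨x - c, h, by abel⟩

lemma card_shift (S : Finset H) (c : H) : (S.image (· + c)).card = S.card :=
  card_image_of_injective _ (add_left_injective c)

lemma lam_zero (S : Finset H) : lam S 0 = 0 := by
  simp [lam]

lemma lam_le_card (S : Finset H) (c : H) : lam S c ≤ S.card := by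
  calc lam S c ≤ (S.image (· + c)).card := card_le_card (sdiff_subset)
  _ = S.card := card_shift S c

lemma lam_comm (S : Finset H) (c : H) : (S \ (S.image (· + c))).card = lam S c := by
  unfold lam
  exact card_sdiff_comm (card_shift S c).symm

lemma lam_neg (S : Finset H) (c : H) : lam S (-c) = lam S c := by
  rw [← lam_comm]
  unfold lam
  apply card_bij (fun x _ => x + c)
  · intro x hx
    simp only [mem_sdiff, mem_shift] at hx ⊢
    constructor
    · simpa using hx.1
    · intro hmem
      exact hx.2 (by simpa [mem_shift] using hmem)
  · intro a ha b hb hab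
    simpa using hab
  · intro b hb
    refine ⟨b - c, ?_, by abel⟩
    simp only [mem_sdiff, mem_shift] at hb ⊢
    refine ⟨by simpa using hb.1, fun hmem => hb.2 ?_⟩
    simpa [mem_shift] using hmem

lemma shift_shift (S : Finset H) (a b : H) :
    (S.image (· + a)).image (· + b) = S.image (· + (a + b)) := by
  rw [image_image]
  congr 1
  ext x
  simp [add_assoc]

lemma lam_add_le (S : Finset H) (a b : H) : lam S (a + b) ≤ lam S a + lam S b := by
  unfold lam
  have hsub : (S.image (· + (a + b))) \ S ⊆
      ((S.image (· + (a + b))) \ (S.image (· + b))) ∪ ((S.image (· + b)) \ S) := by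
    intro x hx
    simp only [mem_sdiff, mem_union] at hx ⊢
    by_cases h : x ∈ S.image (· + b)
    · exact Or.inr ⟨h, hx.2⟩
    · exact Or.inl ⟨hx.1, h⟩
  calc ((S.image (· + (a + b))) \ S).card
      ≤ (((S.image (· + (a + b))) \ (S.image (· + b))) ∪ ((S.image (· + b)) \ S)).card :=
        card_le_card hsub
    _ ≤ ((S.image (· + (a + b))) \ (S.image (· + b))).card + ((S.image (· + b)) \ S).card :=
        card_union_le _ _
    _ = ((S.image (· + a)) \ S).card + ((S.image (· + b)) \ S).card := by
        congr 1
        rw [← shift_shift S a b, ← image_sdiff _ _ (add_left_injective b),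
          card_image_of_injective _ (add_left_injective b)]

lemma lam_eq_zero_shift {S : Finset H} {c : H} (h : lam S c = 0) :
    S.image (· + c) = S := by
  have h1 : (S.image (· + c)) \ S = ∅ := card_eq_zero.mp h
  have h2 : S.image (· + c) ⊆ S := by
    intro x hx
    by_contra hxS
    have : x ∈ (S.image (· + c)) \ S := mem_sdiff.mpr ⟨hx, hxS⟩
    rw [h1] at this
    exact absurd this (notMem_empty x)
  exact eq_of_subset_of_card_le h2 (by rw [card_shift])

lemma zmultiples_neg_gen {c : H} (h : AddSubgroup.zmultiples c = ⊤) :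
    AddSubgroup.zmultiples (-c) = ⊤ := by
  rw [eq_top_iff]
  intro x _
  have : x ∈ AddSubgroup.zmultiples c := by rw [h]; trivial
  obtain ⟨j, hj⟩ := AddSubgroup.mem_zmultiples_iff.mp this
  exact AddSubgroup.mem_zmultiples_iff.mpr ⟨-j, by simpa using hj⟩

section fin
variable [Fintype H]

lemma lam_le_compl (S : Finset H) (c : H) : lam S c ≤ Sᶜ.card := by
  apply card_le_card
  intro x hx
  simp only [mem_sdiff] at hx
  simpa [Finset.mem_compl] using hx.2

lemma shift_invariant_univ {X : Finset H} {c : H}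
    (hc : AddSubgroup.zmultiples c = ⊤)
    (hX : X.image (· + c) = X) (hne : X.Nonempty) : X = Finset.univ := by
  have step : ∀ x ∈ X, x + c ∈ X := by
    intro x hx
    rw [← hX]
    exact mem_image_of_mem _ hx
  have step' : ∀ x ∈ X, x - c ∈ X := by
    intro x hx
    rw [← hX] at hx
    exact mem_shift.mp hx
  have key : ∀ (j : ℤ) (x : H), x ∈ X → x + j • c ∈ X := by
    intro j
    induction j using Int.induction_on with
    | zero => simpa using fun x hx => hx
    | succ i ih =>
        intro x hx
        have := step _ (ih x hx)
        have harr : x + (i + 1 : ℤ) • c = x + (i:ℤ) • c + c := by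
          rw [add_smul]; simp; abel
        rwa [harr]
    | pred i ih =>
        intro x hx
        have := step' _ (ih x hx)
        have harr : x + (-i - 1 : ℤ) • c = x + (-i:ℤ) • c - c := by
          rw [sub_smul]; simp; abel
        rwa [harr]
  obtain ⟨x₀, hx₀⟩ := hne
  apply Finset.eq_univ_of_forall
  intro y
  have : y - x₀ ∈ AddSubgroup.zmultiples c := by rw [hc]; trivial
  obtain ⟨j, hj⟩ := AddSubgroup.mem_zmultiples_iff.mp this
  have := key j x₀ hx₀
  rwa [hj, add_sub_cancel] at this

lemma sum_lam (S : Finset H) : ∑ h : H, lam S h = S.card * Sᶜ.card := by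
  have hrw : ∀ h : H, lam S h = (Sᶜ.filter (fun x => x - h ∈ S)).card := by
    intro h
    unfold lam
    congr 1
    ext x
    simp only [mem_sdiff, mem_filter, Finset.mem_compl, mem_shift]
    tauto
  calc ∑ h : H, lam S h = ∑ h : H, ∑ x ∈ Sᶜ, (if x - h ∈ S then 1 else 0) := by
        refine Finset.sum_congr rfl fun h _ => ?_
        rw [hrw h, Finset.card_filter]
    _ = ∑ x ∈ Sᶜ, ∑ h : H, (if x - h ∈ S then 1 else 0) := Finset.sum_comm
    _ = ∑ x ∈ Sᶜ, S.card := by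
        apply Finset.sum_congr rfl
        intro x _
        rw [← Finset.card_filter]
        have : Finset.univ.filter (fun h => x - h ∈ S) = S.image (fun s => x - s) := by
          ext h
          simp only [mem_filter, mem_univ, true_and, mem_image]
          constructor
          · intro hmem; exact ⟨x - h, hmem, by abel⟩
          · rintro ⟨s, hs, rfl⟩; simpa using hs
        rw [this, card_image_of_injective _ (fun a b hab => by simpa using hab)]
    _ = Sᶜ.card * S.card := by rw [Finset.sum_const, smul_eq_mul]
    _ = S.card * Sᶜ.card := mul_comm _ _

lemma mann_aux :
    ∀ (m : ℕ) (B : Finset H), B.card ≤ m → (0:H) ∈ B →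
      (∀ b ∈ B, b ≠ 0 → AddSubgroup.zmultiples b = ⊤) →
      ∀ A : Finset H, A.Nonempty →
        min (Fintype.card H) (A.card + B.card - 1) ≤ (A + B).card := by
  intro m
  induction m with
  | zero =>
      intro B hBm h0
      exact absurd (card_pos.mpr ⟨0, h0⟩) (by omega)
  | succ m ih =>
      intro B hBm h0 hgenB A hA
      by_cases hall : ∀ b ∈ B, b = 0
      · have hBeq : B = {0} := by
          apply subset_antisymm
          · intro b hb; simp [hall b hb]
          · simpa using h0
        have : A + B = A := by
          rw [hBeq]
          ext x
          simp [Finset.mem_add]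
        rw [this, hBeq]
        simp
      · push_neg at hall
        obtain ⟨b₀, hb₀B, hb₀⟩ := hall
        by_cases hex : ∃ e ∈ A, ¬ (B ⊆ A.image (· - e))
        · obtain ⟨e, heA, hne⟩ := hex
          set A' := A ∪ B.image (· + e) with hA'
          set B' := B ∩ A.image (· - e) with hB'
          have hsub : A' + B' ⊆ A + B := by
            intro x hx
            rw [Finset.mem_add] at hx
            obtain ⟨u, hu, v, hv, rfl⟩ := hx
            have hvB : v ∈ B := (mem_inter.mp hv).1
            have hvA : v ∈ A.image (· - e) := (mem_inter.mp hv).2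
            obtain ⟨a, haA, hae⟩ := mem_image.mp hvA
            rcases mem_union.mp hu with huA | huB
            · exact Finset.mem_add.mpr ⟨u, huA, v, hvB, rfl⟩
            · obtain ⟨b, hbB, rfl⟩ := mem_image.mp huB
              refine Finset.mem_add.mpr ⟨a, haA, b, hbB, ?_⟩
              rw [← hae]; abel
          have hinj : (B \ A.image (· - e)).card ≤ ((B.image (· + e)) \ A).card := by
            apply Finset.card_le_card_of_injOn (fun x => x + e)
            · intro x hx
              rw [Finset.mem_coe, mem_sdiff] at hx ⊢
              constructor
              · exact mem_image_of_mem _ hx.1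
              · intro hcon
                apply hx.2
                exact mem_image.mpr ⟨x + e, hcon, by abel⟩
            · intro a _ b _ hab
              simpa using hab
          have hcardA' : A'.card = ((B.image (· + e)) \ A).card + A.card := by
            rw [hA', Finset.union_comm]
            exact (Finset.card_sdiff_add_card _ _).symm
          have hcardB : B'.card + (B \ A.image (· - e)).card = B.card := by
            rw [hB']
            exact Finset.card_inter_add_card_sdiff _ _
          have hsum : A.card + B.card ≤ A'.card + B'.card := by omega
          have hB'ss : B' ⊆ B := inter_subset_left
          have hB'ne : B' ≠ B := by
            intro hcon
            apply hne
            intro b hb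
            rw [← hcon] at hb
            exact (mem_inter.mp hb).2
          have hB'card : B'.card ≤ m := by
            have := Finset.card_lt_card (ssubset_of_subset_of_ne hB'ss hB'ne)
            omega
          have h0B' : (0:H) ∈ B' := by
            rw [hB', mem_inter]
            exact ⟨h0, mem_image.mpr ⟨e, heA, by abel⟩⟩
          have hgenB' : ∀ b ∈ B', b ≠ 0 → AddSubgroup.zmultiples b = ⊤ :=
            fun b hb => hgenB b (hB'ss hb)
          have hA'ne : A'.Nonempty := hA.mono subset_union_left
          have := ih B' hB'card h0B' hgenB' A' hA'ne
          calc min (Fintype.card H) (A.card + B.card - 1)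
              ≤ min (Fintype.card H) (A'.card + B'.card - 1) := by
                apply min_le_min le_rfl; omega
            _ ≤ (A' + B').card := this
            _ ≤ (A + B).card := card_le_card hsub
        · push_neg at hex
          have hshift : A.image (· + b₀) ⊆ A := by
            intro x hx
            obtain ⟨a, haA, rfl⟩ := mem_image.mp hx
            have := hex a haA hb₀B
            obtain ⟨a', ha'A, ha'⟩ := mem_image.mp this
            have : a + b₀ = a' := by rw [← ha']; abel
            rwa [this]
          have heq : A.image (· + b₀) = A :=
            eq_of_subset_of_card_le hshift
              (le_of_eq (card_image_of_injective _ (add_left_injective b₀)).symm)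
          have hAuniv : A = Finset.univ :=
            shift_invariant_univ (hgenB b₀ hb₀B hb₀) heq hA
          have hABuniv : A + B = Finset.univ := by
            apply Finset.eq_univ_of_forall
            intro x
            refine Finset.mem_add.mpr ⟨x, ?_, 0, h0, add_zero x⟩
            rw [hAuniv]; exact mem_univ x
          rw [hABuniv, card_univ]
          exact min_le_left _ _

end fin

def Nfold (D : Finset H) : ℕ → Finset H
  | 0 => {0}
  | (j+1) => Nfold D j + D

lemma zero_mem_Nfold {D : Finset H} (h0 : (0:H) ∈ D) : ∀ j, (0:H) ∈ Nfold D j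
  | 0 => by simp [Nfold]
  | (j+1) => by
      have := zero_mem_Nfold h0 j
      exact Finset.mem_add.mpr ⟨0, this, 0, h0, add_zero 0⟩

lemma lam_Nfold {S D : Finset H} {t : ℕ} (hD : ∀ v ∈ D, lam S v ≤ t) :
    ∀ j, ∀ w ∈ Nfold D j, lam S w ≤ j * t
  | 0 => by
      intro w hw
      simp only [Nfold, mem_singleton] at hw
      simp [hw, lam_zero]
  | (j+1) => by
      intro w hw
      obtain ⟨u, hu, v, hv, rfl⟩ := Finset.mem_add.mp hw
      calc lam S (u + v) ≤ lam S u + lam S v := lam_add_le S u v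
        _ ≤ j * t + t := Nat.add_le_add (lam_Nfold hD j u hu) (hD v hv)
        _ = (j+1) * t := by ring

lemma card_Nfold [Fintype H] {D : Finset H} {k : ℕ} (h0 : (0:H) ∈ D)
    (hgenD : ∀ b ∈ D, b ≠ 0 → AddSubgroup.zmultiples b = ⊤)
    (hcard : D.card = 2*k+1) :
    ∀ j, min (Fintype.card H) (2*k*j + 1) ≤ (Nfold D j).card
  | 0 => by
      simp [Nfold]
  | (j+1) => by
      have IH := card_Nfold h0 hgenD hcard j
      have hne : (Nfold D j).Nonempty := ⟨0, zero_mem_Nfold h0 j⟩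
      have hmann := mann_aux D.card D le_rfl h0 hgenD (Nfold D j) hne
      rw [hcard] at hmann
      have hrfl : (Nfold D (j+1)).card = (Nfold D j + D).card := rfl
      rw [hrfl]
      have hexp : 2*k*(j+1) = 2*k*j + 2*k := by ring
      omega

/-- key identity: sums of level-set counts -/
lemma sum_levels [Fintype H] (S : Finset H) :
    ∑ T ∈ range (deficiency S), (univ.filter (fun h : H => lam S h ≤ T)).card
      = deficiency S * deficiency S := by
  set d := deficiency S with hd
  have hlamle : ∀ h : H, lam S h ≤ d := fun h =>
    le_min (lam_le_card S h) (lam_le_compl S h)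
  have step1 : ∀ h : H, ((range d).filter (fun T => lam S h ≤ T)).card = d - lam S h := by
    intro h
    have : (range d).filter (fun T => lam S h ≤ T) = Ico (lam S h) d := by
      ext T
      simp only [mem_filter, mem_range, mem_Ico]
      omega
    rw [this, Nat.card_Ico]
  have swap : ∑ T ∈ range d, (univ.filter (fun h : H => lam S h ≤ T)).card
      = ∑ h : H, ((range d).filter (fun T => lam S h ≤ T)).card := by
    simp only [Finset.card_filter]
    exact Finset.sum_comm
  rw [swap]
  simp only [step1]
  have key : ∑ h : H, (d - lam S h) + ∑ h : H, lam S h = Fintype.card H * d := by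
    rw [← Finset.sum_add_distrib]
    have : ∀ h : H, (d - lam S h) + lam S h = d := fun h => Nat.sub_add_cancel (hlamle h)
    simp only [this]
    simp [Finset.sum_const, mul_comm]
  rw [sum_lam] at key
  have hn : S.card + Sᶜ.card = Fintype.card H := Finset.card_add_card_compl S
  have hdd : d * d + S.card * Sᶜ.card = Fintype.card H * d := by
    rcases le_total S.card Sᶜ.card with hle | hle
    · have : d = S.card := by rw [hd, deficiency]; omega
      rw [this, ← hn]; ring
    · have : d = Sᶜ.card := by rw [hd, deficiency]; omega
      rw [this, ← hn]; ring
  omega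

lemma div_add_div_ge {t : ℕ} (ht : 0 < t) (u v : ℕ) : (u+v)/t ≤ u/t + v/t + 1 := by
  have hu := Nat.div_add_mod u t
  have hv := Nat.div_add_mod v t
  have hmu : u % t < t := Nat.mod_lt _ ht
  have hmv : v % t < t := Nat.mod_lt _ ht
  have key : u + v < (u/t + v/t + 2) * t := by
    have hexp : (u/t + v/t + 2) * t = t*(u/t) + t*(v/t) + 2*t := by ring
    omega
  have h2 : (u+v)/t < u/t + v/t + 2 := (Nat.div_lt_iff_lt_mul ht).mpr key
  omega

end Stmt11Aux

open Stmt11Aux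

theorem stmt11 {H : Type*} [AddCommGroup H] [Fintype H] [DecidableEq H]
    (C : Finset H) (hC : C.Nonempty)
    (hgen : ∀ c ∈ C, AddSubgroup.zmultiples c = ⊤)
    (hdisj : ∀ c ∈ C, -c ∉ C)
    (γ : ℝ) (hγ : 2 < γ)
    (S : Finset H)
    (hdef : (deficiency S : ℝ) ≥ γ * (C.card : ℝ)) :
    ∃ c ∈ C, (lam S c : ℝ) ≥ (1 - 4 / γ) * (C.card : ℝ) := by
  by_contra hcon
  push_neg at hcon
  obtain ⟨k, hk⟩ : ∃ k, k = C.card := ⟨_, rfl⟩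
  obtain ⟨n, hnn⟩ : ∃ n, n = Fintype.card H := ⟨_, rfl⟩
  obtain ⟨d, hddef⟩ : ∃ d, d = deficiency S := ⟨_, rfl⟩
  have hk1 : 1 ≤ k := by rw [hk]; exact card_pos.mpr hC
  -- max of lam over C
  obtain ⟨c₀, hc₀C, hc₀max⟩ := C.exists_max_image (lam S) hC
  obtain ⟨t, ht⟩ : ∃ t, t = lam S c₀ := ⟨_, rfl⟩
  have hmax : ∀ v ∈ C, lam S v ≤ t := by
    intro v hv; rw [ht]; exact hc₀max v hv
  have htlt : (t:ℝ) < (1 - 4/γ) * k := by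
    rw [ht, hk]; exact hcon c₀ hc₀C
  have hγ0 : (0:ℝ) < γ := by linarith
  have hγ4 : 4 < γ := by
    by_contra hcon4
    push_neg at hcon4
    have h1 : 1 - 4/γ ≤ 0 := by
      have : 1 ≤ 4/γ := by rw [le_div_iff₀ hγ0]; linarith
      linarith
    have h2 : (1 - 4/γ) * k ≤ 0 :=
      mul_nonpos_of_nonpos_of_nonneg h1 (Nat.cast_nonneg k)
    have h3 : (0:ℝ) ≤ t := Nat.cast_nonneg t
    linarith
  have hdR : (d:ℝ) ≥ γ * k := by rw [hddef, hk]; exact hdef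
  have hd3 : 3 ≤ d := by
    have h2 : (2:ℝ) < (d:ℝ) := by
      have h1 : (1:ℝ) ≤ k := by exact_mod_cast hk1
      nlinarith
    have : 2 < d := by exact_mod_cast h2
    omega
  -- t = 0 impossible
  have ht1 : 1 ≤ t := by
    rcases Nat.eq_zero_or_pos t with ht0 | h
    swap
    · exact h
    exfalso
    have hlz : lam S c₀ = 0 := by rw [← ht]; exact ht0
    have hSh := lam_eq_zero_shift hlz
    rcases S.eq_empty_or_nonempty with hS | hS
    · have : d = 0 := by rw [hddef, hS]; simp [deficiency]
      omega
    · have hSu : S = Finset.univ := shift_invariant_univ (hgen c₀ hc₀C) hSh hS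
      have : d = 0 := by rw [hddef, hSu]; simp [deficiency]
      omega
  -- key nat inequality A
  have hA : t * d + 4 * (k*k) < k * d := by
    have hd0 : (0:ℝ) < d := by exact_mod_cast (by omega : 0 < d)
    have h1 : (t:ℝ) * d < (1 - 4/γ) * k * d := mul_lt_mul_of_pos_right htlt hd0
    have h2 : (4:ℝ)*(k*k) ≤ (4/γ) * (k * d) := by
      rw [div_mul_eq_mul_div, le_div_iff₀ hγ0]
      have hkR : (0:ℝ) ≤ k := Nat.cast_nonneg k
      nlinarith
    have h3 : (1 - 4/γ) * (k:ℝ) * d = k*d - (4/γ)*(k*d) := by ring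
    have h4 : (t:ℝ)*d + 4*(k*k) < k*d := by
      rw [h3] at h1
      linarith
    exact_mod_cast h4
  have htk : t < k := by
    by_contra hcon2
    push_neg at hcon2
    have : k * d ≤ t * d := Nat.mul_le_mul_right d hcon2
    omega
  have hk2 : 2 ≤ k := by omega
  have hd4k : 4*k < d := by
    by_contra hcon3
    push_neg at hcon3
    have h1 : k*d ≤ k*(4*k) := Nat.mul_le_mul_left k hcon3
    have h2 : k*(4*k) = 4*(k*k) := by ring
    have h3 : 1*d ≤ t*d := Nat.mul_le_mul_right d ht1
    omega
  have hn2d : 2*d ≤ n := by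
    have h1 : d ≤ S.card := by rw [hddef]; exact min_le_left _ _
    have h2 : d ≤ Sᶜ.card := by rw [hddef]; exact min_le_right _ _
    have h3 : S.card + Sᶜ.card = n := by rw [hnn]; exact Finset.card_add_card_compl S
    omega
  -- the symmetric generating set
  have h0C : (0:H) ∉ C := fun h => hdisj 0 h (by simpa using h)
  have hdisjCC : Disjoint C (C.image (fun c => -c)) := by
    rw [Finset.disjoint_left]
    intro x hxC hxI
    obtain ⟨c', hc', rfl⟩ := mem_image.mp hxI
    exact hdisj c' hc' hxC
  have hDcard : (C ∪ C.image (fun c => -c)).card = 2*k := by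
    rw [card_union_of_disjoint hdisjCC, card_image_of_injective _ neg_injective, ← hk]
    omega
  have h0D : (0:H) ∉ C ∪ C.image (fun c => -c) := by
    rw [mem_union]
    rintro (h | h)
    · exact h0C h
    · obtain ⟨c', hc', hc'0⟩ := mem_image.mp h
      have : c' = 0 := by simpa [neg_eq_zero] using hc'0
      exact h0C (this ▸ hc')
  obtain ⟨Db, hDb⟩ : ∃ Db : Finset H, Db = insert (0:H) (C ∪ C.image (fun c => -c)) :=
    ⟨_, rfl⟩
  have hDbcard : Db.card = 2*k+1 := by
    rw [hDb, card_insert_of_notMem h0D, hDcard]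
  have h0Db : (0:H) ∈ Db := by rw [hDb]; exact mem_insert_self _ _
  have hgenDb : ∀ b ∈ Db, b ≠ 0 → AddSubgroup.zmultiples b = ⊤ := by
    intro b hb hb0
    rw [hDb] at hb
    rcases mem_insert.mp hb with h | h
    · exact absurd h hb0
    rcases mem_union.mp h with h | h
    · exact hgen b h
    · obtain ⟨c', hc', rfl⟩ := mem_image.mp h
      exact zmultiples_neg_gen (hgen c' hc')
  have hlamDb : ∀ v ∈ Db, lam S v ≤ t := by
    intro v hv
    rw [hDb] at hv
    rcases mem_insert.mp hv with h | h
    · rw [h, lam_zero]; omega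
    rcases mem_union.mp h with h | h
    · exact hmax v h
    · obtain ⟨c', hc', rfl⟩ := mem_image.mp h
      rw [lam_neg]
      exact hmax c' hc'
  -- Q and a
  obtain ⟨Q, hQ⟩ : ∃ Q, Q = (d + k - 1)/k := ⟨_, rfl⟩
  have hkQ : d ≤ k*Q ∧ k*Q ≤ d + k - 1 := by
    have h1 := Nat.div_add_mod (d + k - 1) k
    have h2 : (d + k - 1) % k < k := Nat.mod_lt _ (by omega)
    rw [← hQ] at h1
    omega
  have hQ5 : 5 ≤ Q := by
    by_contra hc5
    push_neg at hc5
    have : k*Q ≤ k*4 := Nat.mul_le_mul_left k (by omega)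
    have h4 : k*4 = 4*k := by ring
    omega
  obtain ⟨a, ha⟩ : ∃ a, a = t*Q := ⟨_, rfl⟩
  have hka : k*a + 3*(k*k) ≤ k*d := by
    have h1 : k*a = t*(k*Q) := by rw [ha]; ring
    have h2 : t*(k*Q) ≤ t*(d + k - 1) := Nat.mul_le_mul_left t hkQ.2
    have h3 : t*(d + k - 1) = t*d + t*(k-1) := by
      have he : d + k - 1 = d + (k-1) := by omega
      rw [he, Nat.mul_add]
    have h4 : t*(k-1) ≤ (k-1)*(k-1) := Nat.mul_le_mul_right (k-1) (by omega)
    have h5 : (k-1)*(k-1) + 3*(k*k) ≤ 4*(k*k) := by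
      obtain ⟨m, rfl⟩ : ∃ m, k = m + 1 := ⟨k-1, by omega⟩
      simp only [Nat.add_sub_cancel]
      have hm : m*m ≤ (m+1)*(m+1) := Nat.mul_le_mul (by omega) (by omega)
      have he1 : (m+1)*(m+1) = m*m + 2*m + 1 := by ring
      omega
    omega
  have had : a + 3*k ≤ d := by
    have h1 : k*(a + 3*k) ≤ k*d := by
      have h2 : k*(a+3*k) = k*a + 3*(k*k) := by ring
      omega
    exact Nat.le_of_mul_le_mul_left h1 (by omega)
  -- pointwise bound on level sets
  have hmT : ∀ T : ℕ, 2 * min d (k * (T/t)) ≤ (univ.filter (fun h : H => lam S h ≤ T)).card := by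
    intro T
    have hsub : Nfold Db (T/t) ⊆ univ.filter (fun h : H => lam S h ≤ T) := by
      intro w hw
      rw [mem_filter]
      refine ⟨mem_univ w, ?_⟩
      calc lam S w ≤ (T/t) * t := lam_Nfold hlamDb (T/t) w hw
        _ ≤ T := Nat.div_mul_le_self T t
    have h1 := card_Nfold h0Db hgenDb hDbcard (T/t)
    have h2 := card_le_card hsub
    have h3 : 2*k*(T/t) = 2*(k*(T/t)) := by ring
    rw [← hnn] at h1
    omega
  -- assemble
  have hsum : ∑ T ∈ range d, (univ.filter (fun h : H => lam S h ≤ T)).card = d * d := by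
    rw [hddef]; exact sum_levels S
  have hsumlb : ∑ T ∈ range d, 2 * min d (k * (T/t))
      ≤ ∑ T ∈ range d, (univ.filter (fun h : H => lam S h ≤ T)).card :=
    Finset.sum_le_sum (fun T _ => hmT T)
  have hsplit : ∑ T ∈ range d, 2 * min d (k * (T/t))
      = ∑ T ∈ range a, 2 * min d (k * (T/t)) + ∑ T ∈ Ico a d, 2 * min d (k * (T/t)) := by
    rw [range_eq_Ico, ← Finset.sum_Ico_consecutive _ (Nat.zero_le a) (by omega : a ≤ d),
      ← range_eq_Ico]
  have hupper : ∑ T ∈ Ico a d, 2 * min d (k * (T/t)) = (d - a) * (2*d) := by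
    rw [Finset.sum_congr rfl (fun T hT => ?_), Finset.sum_const, Nat.card_Ico, smul_eq_mul]
    have hTa : a ≤ T := (mem_Ico.mp hT).1
    have hdiv : Q ≤ T/t := by
      rw [Nat.le_div_iff_mul_le (by omega : 0 < t)]
      calc Q * t = a := by rw [ha]; ring
        _ ≤ T := hTa
    have hmin : d ≤ k*(T/t) := le_trans hkQ.1 (Nat.mul_le_mul_left k hdiv)
    rw [min_eq_left hmin]
  have hlowr : ∑ T ∈ range a, 2 * min d (k * (T/t)) = 2*k * ∑ T ∈ range a, (T/t) := by
    rw [Finset.mul_sum]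
    apply Finset.sum_congr rfl
    intro T hT
    have hTa : T < a := mem_range.mp hT
    have hdiv : T/t < Q := by
      rw [Nat.div_lt_iff_lt_mul (by omega : 0 < t)]
      calc T < a := hTa
        _ = Q * t := by rw [ha]; ring
    have hmin : k*(T/t) ≤ d := by
      have h1 : k*(T/t) + k ≤ k*Q := by
        have h0 : (T/t) + 1 ≤ Q := hdiv
        calc k*(T/t) + k = k*((T/t) + 1) := by ring
          _ ≤ k*Q := Nat.mul_le_mul_left k h0
      omega
    rw [min_eq_right hmin]
    ring
  -- pairing bound
  have hpair : a * (Q - 2) ≤ 2 * ∑ T ∈ range a, (T/t) := by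
    have hrefl : ∑ T ∈ range a, ((a - 1 - T)/t) = ∑ T ∈ range a, (T/t) :=
      Finset.sum_range_reflect (fun T => T/t) a
    have h2 : 2 * ∑ T ∈ range a, (T/t) = ∑ T ∈ range a, ((T/t) + ((a-1-T)/t)) := by
      rw [Finset.sum_add_distrib, hrefl]
      ring
    rw [h2]
    have hconst : ∑ _T ∈ range a, (Q-2) = a * (Q-2) := by
      rw [Finset.sum_const, card_range, smul_eq_mul]
    rw [← hconst]
    apply Finset.sum_le_sum
    intro T hT
    have hTa : T < a := mem_range.mp hT
    have hsum2 : T + (a - 1 - T) = a - 1 := by omega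
    have h3 := div_add_div_ge (by omega : 0 < t) T (a-1-T)
    rw [hsum2] at h3
    have h4 : Q - 1 ≤ (a-1)/t := by
      rw [Nat.le_div_iff_mul_le (by omega : 0 < t)]
      have h5 : (Q-1)*t + t = Q*t := by
        have hq1 : Q - 1 + 1 = Q := by omega
        calc (Q-1)*t + t = ((Q-1)+1)*t := by ring
          _ = Q*t := by rw [hq1]
      have h6 : Q*t = a := by rw [ha]; ring
      omega
    omega
  -- final contradiction
  have hfin : 2*k * ∑ T ∈ range a, (T/t) + (d-a)*(2*d) ≤ d*d := by
    calc 2*k * ∑ T ∈ range a, (T/t) + (d-a)*(2*d)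
        = ∑ T ∈ range d, 2 * min d (k * (T/t)) := by rw [hsplit, hlowr, hupper]
      _ ≤ ∑ T ∈ range d, (univ.filter (fun h : H => lam S h ≤ T)).card := hsumlb
      _ = d*d := hsum
  have hka2 : k * (a*(Q-2)) ≤ 2*k * ∑ T ∈ range a, (T/t) := by
    calc k * (a*(Q-2)) ≤ k * (2 * ∑ T ∈ range a, (T/t)) := Nat.mul_le_mul_left k hpair
      _ = 2*k * ∑ T ∈ range a, (T/t) := by ring
  have p2 : k*(a*(Q-2)) + 2*(k*a) = k*a*Q := by
    have hQ2 : Q - 2 + 2 = Q := by omega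
    calc k*(a*(Q-2)) + 2*(k*a) = k*a*((Q-2)+2) := by ring
      _ = k*a*Q := by rw [hQ2]
  have p1 : a*d ≤ a*(k*Q) := Nat.mul_le_mul_left a hkQ.1
  have p5 : a*(k*Q) = k*a*Q := by ring
  have p3 : 3*(k*d) ≤ (d-a)*d := by
    have h1 : 3*k ≤ d - a := by omega
    calc 3*(k*d) = (3*k)*d := by ring
      _ ≤ (d-a)*d := Nat.mul_le_mul_right d h1
  have p6 : d*d = a*d + (d-a)*d := by
    have hde : a + (d - a) = d := by omega
    calc d*d = (a + (d-a))*d := by rw [hde]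
      _ = a*d + (d-a)*d := by ring
  have p7 : k*a ≤ k*d := Nat.mul_le_mul_left k (by omega)
  have p8 : 1 ≤ k*d := by
    have h0 : 1*1 ≤ k*d := Nat.mul_le_mul hk1 (by omega)
    omega
  have p9 : (d-a)*(2*d) = 2*((d-a)*d) := by ring
  omega
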